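/- For all x ∈ [0,h], x(h-x) = Σ_{k=1}^∞ (4h²(1-(-1)^k)/(πk)³) sin(πkx/h). -/

import Mathlib

open Real

lemma bern3_eval (t : ℝ) : (Polynomial.map (algebraMap ℚ ℝ) (Polynomial.bernoulli 3)).eval t
    = t^3 - 3/2*t^2 + 1/2*t := by
  simp [Polynomial.bernoulli, Finset.sum_range_succ, bernoulli]
  ring

lemma cos_nat_pi (n : ℕ) : Real.cos (n * π) = (-1)^n := by
  simpa using Real.cos_nat_mul_pi_sub 0 n

/-- Fourier sine series of `x ↦ x(h-x)` on `[0,h]`: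
`x(h-x) = Σ_{k=1}^∞ (4h²(1-(-1)^k)/(πk)³) sin(πkx/h)`. -/
theorem fourier_sine_series_parabola
    (h : ℝ) (hh : 0 < h) :
    ∀ x ∈ Set.Icc (0:ℝ) h,
      HasSum
        (fun k : ℕ+ =>
          4 * h ^ 2 * (1 - (-1 : ℝ) ^ (k : ℕ)) / (Real.pi * (k : ℝ)) ^ 3 *
            Real.sin (Real.pi * (k : ℝ) * x / h))
        (x * (h - x)) := by
  intro y hy
  obtain ⟨hy0, hyh⟩ := hy
  have hπ : (0:ℝ) < π := Real.pi_pos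
  have hne : h ≠ 0 := hh.ne'
  set x : ℝ := y / (2*h) with hxdef
  have hx2 : x ≤ 1/2 := by
    rw [hxdef, div_le_div_iff₀ (by linarith) (by norm_num)]; linarith
  have hx : x ∈ Set.Icc (0:ℝ) 1 := ⟨div_nonneg hy0 (by linarith), by linarith⟩
  have hx' : x + 1/2 ∈ Set.Icc (0:ℝ) 1 := ⟨by linarith [hx.1], by linarith⟩
  have H1 := hasSum_one_div_nat_pow_mul_sin one_ne_zero hx
  have H2 := hasSum_one_div_nat_pow_mul_sin one_ne_zero hx'
  have H3 := (H1.sub H2).mul_left (4*h^2/π^3)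
  rw [show 2*1+1 = 3 from rfl] at H3
  have hfact : ((3:ℕ).factorial : ℝ) = 6 := by norm_num [Nat.factorial]
  rw [bern3_eval, bern3_eval, hfact] at H3
  set g : ℕ → ℝ := fun n =>
    4 * h ^ 2 * (1 - (-1 : ℝ) ^ n) / (π * (n : ℝ)) ^ 3 * Real.sin (π * (n : ℝ) * y / h) with hg
  have H4 : HasSum g (y * (h - y)) := by
    convert H3 using 1
    · rfl
    · funext n
      rcases Nat.eq_zero_or_pos n with rfl | hn
      · simp [hg]
      have hn0 : (n:ℝ) ≠ 0 := Nat.cast_ne_zero.mpr hn.ne'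
      have harg : 2 * π * n * x = π * n * y / h := by
        rw [hxdef]; field_simp
      have harg2 : 2 * π * n * (x + 1/2) = π * n * y / h + n * π := by
        rw [hxdef]; field_simp
      rw [hg]
      simp only [harg, harg2, Real.sin_add, cos_nat_pi, Real.sin_nat_mul_pi]
      field_simp
      ring
    · rw [hxdef]
      field_simp
      ring
  have h0 : ∀ n ∉ Set.range (fun k : ℕ+ => (k : ℕ)), g n = 0 := by
    intro n hn
    have : n = 0 := by
      by_contra h0
      exact hn ⟨⟨n, Nat.pos_of_ne_zero h0⟩, rfl⟩
    simp [this, hg]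
  exact (Function.Injective.hasSum_iff (fun a b hab => PNat.coe_injective hab) h0).mpr H4
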